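/- The group SL(2,3) is a DC-group that is not supersolvable and has a non-abelian Sylow 2-subgroup (isomorphic to the quaternion group Q₈). -/

import Mathlib

/-- A group is a `DC`-group if the set of derived subgroups of its subgroups
is a chain under inclusion. -/
def IsDCGroup (G : Type*) [Group G] : Prop :=
  ∀ H K : Subgroup G, ⁅H, H⁆ ≤ ⁅K, K⁆ ∨ ⁅K, K⁆ ≤ ⁅H, H⁆

/-- A group is supersolvable if it has a normal series (all terms normal in the
whole group) with cyclic factors. -/
def IsSupersolvable (G : Type*) [Group G] : Prop :=
  ∃ (n : ℕ) (s : Fin (n + 1) → Subgroup G),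
    s 0 = ⊥ ∧ s (Fin.last n) = ⊤ ∧ (∀ i, (s i).Normal) ∧
    ∀ i : Fin n, s i.castSucc ≤ s i.succ ∧
      ∀ (_ : (s i.castSucc).Normal),
        IsCyclic (↥(s i.succ) ⧸ (s i.castSucc).subgroupOf (s i.succ))

set_option maxRecDepth 40000
set_option maxHeartbeats 8000000

namespace SL23Aux

open scoped commutatorElement

abbrev Gsl := Matrix.SpecialLinearGroup (Fin 2) (ZMod 3)
abbrev Mx := Matrix (Fin 2) (Fin 2) (ZMod 3)

instance : DecidableEq Gsl := fun a b => decidable_of_iff (a.1 = b.1) Subtype.ext_iff.symm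

/-- fast 2×2 matrix multiplication -/
def mulM (A B : Mx) : Mx :=
  !![A 0 0 * B 0 0 + A 0 1 * B 1 0, A 0 0 * B 0 1 + A 0 1 * B 1 1;
     A 1 0 * B 0 0 + A 1 1 * B 1 0, A 1 0 * B 0 1 + A 1 1 * B 1 1]

/-- fast inverse (for determinant-one matrices) -/
def minv (A : Mx) : Mx := !![A 1 1, - A 0 1; - A 1 0, A 0 0]

def eM : Mx := !![1,0;0,1]
def wM : Mx := !![2,0;0,2]

def cmM (A B : Mx) : Mx := mulM (mulM (mulM A B) (minv A)) (minv B)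

def pw (A : Mx) : ℕ → Mx
  | 0 => eM
  | n+1 => mulM (pw A n) A

theorem mulM_eq (A B : Mx) : mulM A B = A * B := by
  ext i j
  fin_cases i <;> fin_cases j <;>
    simp [mulM, Matrix.mul_apply, Fin.sum_univ_two]

theorem eM_eq : eM = (1 : Mx) := by decide

theorem minv_eq (a : Gsl) : minv a.1 = (a⁻¹).1 := by
  rw [Matrix.SpecialLinearGroup.coe_inv, Matrix.adjugate_fin_two]; rfl

theorem pw_eq (A : Mx) (n : ℕ) : pw A n = A ^ n := by
  induction n with
  | zero => simpa [pw] using eM_eq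
  | succ n ih => rw [pw, ih, mulM_eq, pow_succ]

theorem cmM_eq (a b : Gsl) : cmM a.1 b.1 = (⁅a, b⁆ : Gsl).1 := by
  simp [cmM, mulM_eq, minv_eq, commutatorElement_def, Matrix.SpecialLinearGroup.coe_mul]

theorem D1 : ∀ a b : Gsl, pw (cmM a.1 b.1) 4 = eM := by decide +kernel

theorem D4 : ∀ a b : Gsl,
    (cmM a.1 b.1 = eM ∨ cmM a.1 b.1 = wM) ∨
    ((mulM (cmM a.1 (cmM a.1 b.1)) (cmM a.1 (cmM a.1 b.1)) = wM ∧
      mulM (cmM a.1 b.1) (cmM a.1 (cmM a.1 b.1)) ≠ eM ∧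
      cmM a.1 (cmM a.1 b.1) ≠ cmM a.1 b.1) ∨
     (mulM (cmM b.1 (cmM a.1 b.1)) (cmM b.1 (cmM a.1 b.1)) = wM ∧
      mulM (cmM a.1 b.1) (cmM b.1 (cmM a.1 b.1)) ≠ eM ∧
      cmM b.1 (cmM a.1 b.1) ≠ cmM a.1 b.1)) := by decide +kernel

set_option synthInstance.maxHeartbeats 400000 in
theorem D5 : ∀ c : Gsl, pw c.1 4 = eM → c.1 ≠ eM → c.1 ≠ wM →
    ∀ d : Gsl, mulM d.1 d.1 = wM → mulM c.1 d.1 ≠ eM → d.1 ≠ c.1 →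
    ∀ x : Gsl, pw x.1 4 = eM →
    ∃ k ∈ Finset.range 4, ∃ l ∈ Finset.range 2, x.1 = mulM (pw c.1 k) (pw d.1 l) := by decide +kernel

theorem D6 : ∀ x : Gsl, x.1 = eM ∨ x.1 = wM ∨
    ∃ g : Gsl, mulM x.1 (mulM (mulM g.1 x.1) (minv g.1)) ≠
      mulM (mulM (mulM g.1 x.1) (minv g.1)) x.1 := by decide +kernel

theorem D7 : ∀ x : Gsl, pw x.1 24 = eM := by decide +kernel

theorem D8 : ∀ x : Gsl, pw x.1 8 = eM → pw x.1 4 = eM := by decide +kernel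

theorem D9 : ∀ x : Gsl, (x.1 = eM ∨ x.1 = wM) → ∀ g : Gsl, mulM x.1 g.1 = mulM g.1 x.1 := by decide +kernel

theorem D2 : ∀ a : Gsl, pw a.1 4 = eM → ∀ b : Gsl, pw b.1 4 = eM →
    pw (mulM a.1 b.1) 4 = eM := by decide +kernel

theorem D3 : ∀ a : Gsl, pw a.1 4 = eM → pw (minv a.1) 4 = eM := by decide +kernel

theorem D12 : ∀ a : Gsl, (a.1 = eM ∨ a.1 = wM) → ∀ b : Gsl, (b.1 = eM ∨ b.1 = wM) →
    (mulM a.1 b.1 = eM ∨ mulM a.1 b.1 = wM) := by decide +kernel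

theorem D13 : ∀ a : Gsl, (a.1 = eM ∨ a.1 = wM) → (minv a.1 = eM ∨ minv a.1 = wM) := by decide +kernel

theorem D14 : ∀ a : Gsl, (a.1 = eM ∨ a.1 = wM) → pw a.1 4 = eM := by decide +kernel

def w : Gsl := ⟨wM, by decide⟩
def t : Gsl := ⟨!![1,1;0,1], by decide⟩



def Qgrp : Subgroup Gsl where
  carrier := {x | pw x.1 4 = eM}
  one_mem' := D14 1 (Or.inl (by decide))
  mul_mem' := fun {a b} ha hb => by
    have h := D2 a ha b hb
    show pw ((a * b).1) 4 = eM
    rwa [Matrix.SpecialLinearGroup.coe_mul, ← mulM_eq]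
  inv_mem' := fun {a} ha => by
    have h := D3 a ha
    show pw ((a⁻¹).1) 4 = eM
    rwa [← minv_eq]

def Zgrp : Subgroup Gsl where
  carrier := {x | x.1 = eM ∨ x.1 = wM}
  one_mem' := Or.inl (by decide)
  mul_mem' := fun {a b} ha hb => by
    have h := D12 a ha b hb
    show (a * b).1 = eM ∨ (a * b).1 = wM
    rwa [Matrix.SpecialLinearGroup.coe_mul, ← mulM_eq]
  inv_mem' := fun {a} ha => by
    have h := D13 a ha
    show (a⁻¹).1 = eM ∨ (a⁻¹).1 = wM
    rwa [← minv_eq]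

theorem mem_Q {x : Gsl} : x ∈ Qgrp ↔ x ^ 4 = 1 := by
  have h : (x ∈ Qgrp) ↔ pw x.1 4 = eM := Iff.rfl
  rw [h, pw_eq, show eM = (1 : Gsl).1 from (by decide), ← Matrix.SpecialLinearGroup.coe_pow]
  exact ⟨fun hh => Subtype.ext hh, fun hh => congrArg Subtype.val hh⟩

theorem mem_Z {x : Gsl} : x ∈ Zgrp ↔ x = 1 ∨ x = w := by
  have h : (x ∈ Zgrp) ↔ (x.1 = eM ∨ x.1 = wM) := Iff.rfl
  rw [h]
  constructor
  · rintro (h1 | h1)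
    · exact Or.inl (Subtype.ext (h1.trans eM_eq))
    · exact Or.inr (Subtype.ext h1)
  · rintro (h1 | h1)
    · exact Or.inl (by rw [h1]; exact eM_eq.symm)
    · exact Or.inr (by rw [h1]; rfl)

theorem Z_le_Q : Zgrp ≤ Qgrp := fun x hx => D14 x hx

theorem derived_le_Q (H : Subgroup Gsl) : ⁅H, H⁆ ≤ Qgrp := by
  rw [Subgroup.commutator_le]
  intro a _ b _
  show pw ((⁅a, b⁆ : Gsl).1) 4 = eM
  rw [← cmM_eq]
  exact D1 a b

theorem derived_classify (H : Subgroup Gsl) : ⁅H, H⁆ ≤ Zgrp ∨ ⁅H, H⁆ = Qgrp := by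
  by_cases h : ∀ a ∈ H, ∀ b ∈ H, (⁅a, b⁆ : Gsl) ∈ Zgrp
  · left
    rw [Subgroup.commutator_le]
    exact h
  · right
    push_neg at h
    obtain ⟨a, ha, b, hb, hc⟩ := h
    set c := (⁅a, b⁆ : Gsl) with hcdef
    have hcH : c ∈ H := by
      rw [hcdef, commutatorElement_def]
      exact mul_mem (mul_mem (mul_mem ha hb) (inv_mem ha)) (inv_mem hb)
    have hcD : c ∈ ⁅H, H⁆ := Subgroup.commutator_mem_commutator ha hb
    have hcQ : pw c.1 4 = eM := by rw [hcdef, ← cmM_eq]; exact D1 a b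
    have hc1 : c.1 ≠ eM := fun h1 => hc (Or.inl h1)
    have hc2 : c.1 ≠ wM := fun h1 => hc (Or.inr h1)
    -- find d
    have hD4 := D4 a b
    rw [cmM_eq a b, ← hcdef] at hD4
    rcases hD4 with (h1 | h1) | (hgd | hgd)
    · exact absurd (Or.inl h1) hc
    · exact absurd (Or.inr h1) hc
    all_goals {
      first
      | (have hdD : (⁅a, c⁆ : Gsl) ∈ ⁅H, H⁆ := Subgroup.commutator_mem_commutator ha hcH
         set d := (⁅a, c⁆ : Gsl) with hddef
         rw [cmM_eq a c, ← hddef] at hgd)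
      | (have hdD : (⁅b, c⁆ : Gsl) ∈ ⁅H, H⁆ := Subgroup.commutator_mem_commutator hb hcH
         set d := (⁅b, c⁆ : Gsl) with hddef
         rw [cmM_eq b c, ← hddef] at hgd)
      obtain ⟨hg1, hg2, hg3⟩ := hgd
      refine le_antisymm (derived_le_Q H) ?_
      intro x hx
      have hxQ : pw x.1 4 = eM := hx
      obtain ⟨k, -, l, -, hkl⟩ := D5 c hcQ hc1 hc2 d hg1 hg2 hg3 x hxQ
      have hx_eq : x = c ^ k * d ^ l := by
        apply Subtype.ext
        rw [hkl, Matrix.SpecialLinearGroup.coe_mul, mulM_eq, pw_eq, pw_eq]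
        simp [Matrix.SpecialLinearGroup.coe_pow]
      rw [hx_eq]
      exact mul_mem (pow_mem hcD k) (pow_mem hdD l)
    }

theorem chainZ {A B : Subgroup Gsl} (hA : A ≤ Zgrp) (hB : B ≤ Zgrp) :
    A ≤ B ∨ B ≤ A := by
  by_cases hw : w ∈ A
  · right
    intro x hx
    rcases mem_Z.1 (hB hx) with h1 | h1
    · rw [h1]; exact one_mem A
    · rw [h1]; exact hw
  · left
    intro x hx
    rcases mem_Z.1 (hA hx) with h1 | h1
    · rw [h1]; exact one_mem B
    · exact absurd (h1 ▸ hx) hw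

theorem dc : IsDCGroup Gsl := by
  intro H K
  rcases derived_classify H with hH | hH <;> rcases derived_classify K with hK | hK
  · exact chainZ hH hK
  · left; rw [hK]; exact le_trans hH Z_le_Q
  · right; rw [hH]; exact le_trans hK Z_le_Q
  · left; rw [hH, hK]

theorem Zcentral {x : Gsl} (hx : x ∈ Zgrp) (g : Gsl) : g * x = x * g := by
  apply Subtype.ext
  rw [Matrix.SpecialLinearGroup.coe_mul, Matrix.SpecialLinearGroup.coe_mul,
    ← mulM_eq, ← mulM_eq]
  exact (D9 x hx g).symm

theorem not_ss : ¬ IsSupersolvable Gsl := by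
  rintro ⟨n, s, h0, hlast, hnorm, hstep⟩
  classical
  have htZ : t ∉ Zgrp := by
    rw [mem_Z]
    rintro (h | h) <;> revert h <;> decide
  have hT : ¬((⊤ : Subgroup Gsl) ≤ Zgrp) := fun h => htZ (h (Subgroup.mem_top t))
  have hex : ∃ k, ∃ hk : k < n + 1, ¬ s ⟨k, hk⟩ ≤ Zgrp := by
    refine ⟨n, n.lt_succ_self, ?_⟩
    have h : (⟨n, n.lt_succ_self⟩ : Fin (n+1)) = Fin.last n := rfl
    rw [h, hlast]; exact hT
  obtain ⟨hk, hks⟩ := Nat.find_spec hex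
  have hk0 : Nat.find hex ≠ 0 := by
    intro h
    apply hks
    have h2 : (⟨Nat.find hex, hk⟩ : Fin (n+1)) = 0 := by
      apply Fin.ext; rw [Fin.val_zero]; exact h
    rw [h2, h0]
    exact bot_le
  obtain ⟨m, hm⟩ : ∃ m, Nat.find hex = m + 1 :=
    ⟨Nat.find hex - 1, (Nat.succ_pred_eq_of_pos (Nat.pos_of_ne_zero hk0)).symm⟩
  have hmn : m < n := by omega
  set i : Fin n := ⟨m, hmn⟩ with hidef
  have hA : s i.castSucc ≤ Zgrp := by
    by_contra hA'
    refine Nat.find_min hex (show m < Nat.find hex by omega) ⟨by omega, ?_⟩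
    have h2 : (⟨m, by omega⟩ : Fin (n+1)) = i.castSucc := by apply Fin.ext; simp [hidef]
    rw [h2]; exact hA'
  have hB : ¬ s i.succ ≤ Zgrp := by
    have h2 : i.succ = ⟨Nat.find hex, hk⟩ := by apply Fin.ext; simp only [Fin.val_succ, hidef]; exact hm.symm
    rw [h2]; exact hks
  haveI hcyc := (hstep i).2 (hnorm _)
  have hcen : (s i.castSucc).subgroupOf (s i.succ) ≤ Subgroup.center ↥(s i.succ) := by
    intro x hx
    rw [Subgroup.mem_center_iff]
    intro g
    have hxZ : (x : Gsl) ∈ Zgrp := hA (Subgroup.mem_subgroupOf.1 hx)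
    exact Subtype.ext (Zcentral hxZ g)
  haveI hno : ((s i.castSucc).subgroupOf (s i.succ)).Normal :=
    (hnorm i.castSucc).subgroupOf (s i.succ)
  have hab : ∀ a b : ↥(s i.succ), a * b = b * a :=
    commutative_of_cyclic_center_quotient
      (QuotientGroup.mk' ((s i.castSucc).subgroupOf (s i.succ)))
      (by rw [QuotientGroup.ker_mk']; exact hcen)
  apply hB
  intro x hx
  rcases D6 x with h | h | ⟨g, hg⟩
  · exact Or.inl h
  · exact Or.inr h
  · exfalso
    apply hg
    have hconj : g * x * g⁻¹ ∈ s i.succ := (hnorm i.succ).conj_mem x hx g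
    have h2 := hab ⟨x, hx⟩ ⟨g * x * g⁻¹, hconj⟩
    have h3 : x * (g * x * g⁻¹) = (g * x * g⁻¹) * x := congrArg Subtype.val h2
    have h4 : mulM (mulM g.1 x.1) (minv g.1) = (g * x * g⁻¹).1 := by
      rw [mulM_eq, mulM_eq, minv_eq, Matrix.SpecialLinearGroup.coe_mul,
        Matrix.SpecialLinearGroup.coe_mul]
    rw [h4, mulM_eq, mulM_eq, ← Matrix.SpecialLinearGroup.coe_mul,
      ← Matrix.SpecialLinearGroup.coe_mul, h3]




theorem pow24 (x : Gsl) : x ^ 24 = 1 := by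
  apply Subtype.ext
  rw [Matrix.SpecialLinearGroup.coe_pow, ← pw_eq]
  rw [show ((1 : Gsl).1 : Mx) = eM from (by decide)]
  exact D7 x

theorem pow84 (x : Gsl) (h : x ^ 8 = 1) : x ^ 4 = 1 := by
  have h8 : pw x.1 8 = eM := by
    rw [pw_eq, ← Matrix.SpecialLinearGroup.coe_pow, h]
    decide
  apply Subtype.ext
  have := D8 x h8
  rw [pw_eq] at this
  rw [Matrix.SpecialLinearGroup.coe_pow, this]
  decide

def Psyl : Sylow 2 Gsl where
  toSubgroup := Qgrp
  isPGroup' := fun g => ⟨2, by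
    rw [show (2 : ℕ)^2 = 4 from rfl]
    apply Subtype.ext
    rw [SubmonoidClass.coe_pow]
    exact mem_Q.1 g.2⟩
  is_maximal' := by
    intro R hR hQR
    refine le_antisymm ?_ hQR
    intro x hx
    obtain ⟨k, hk⟩ := hR ⟨x, hx⟩
    have h1 : x ^ 2 ^ k = 1 := by
      have := congrArg Subtype.val hk
      rwa [SubmonoidClass.coe_pow] at this
    have hd1 : orderOf x ∣ 2 ^ k := orderOf_dvd_of_pow_eq_one h1
    have hd2 : orderOf x ∣ 24 := orderOf_dvd_of_pow_eq_one (pow24 x)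
    obtain ⟨m, hmk, hmo⟩ := (Nat.dvd_prime_pow Nat.prime_two).1 hd1
    have hm3 : m ≤ 3 := by
      by_contra hm'
      have h16 : (2:ℕ) ^ 4 ∣ 24 := dvd_trans (pow_dvd_pow 2 (by omega)) (hmo ▸ hd2)
      norm_num at h16
    have hd8 : orderOf x ∣ 8 :=
      hmo ▸ dvd_trans (pow_dvd_pow 2 hm3) (by norm_num)
    exact mem_Q.2 (pow84 x (orderOf_dvd_iff_pow_eq_one.1 hd8))

instance : DecidablePred (· ∈ Qgrp) := fun x =>
  decidable_of_iff (pw x.1 4 = eM) Iff.rfl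

def qa : ℕ → ↥Qgrp
  | 0 => ⟨⟨!![1,0;0,1], by decide⟩, by show pw _ 4 = eM; decide⟩
  | 1 => ⟨⟨!![0,2;1,0], by decide⟩, by show pw _ 4 = eM; decide⟩
  | 2 => ⟨⟨!![2,0;0,2], by decide⟩, by show pw _ 4 = eM; decide⟩
  | _ => ⟨⟨!![0,1;2,0], by decide⟩, by show pw _ 4 = eM; decide⟩

def qx : ℕ → ↥Qgrp
  | 0 => ⟨⟨!![1,1;1,2], by decide⟩, by show pw _ 4 = eM; decide⟩
  | 1 => ⟨⟨!![1,2;2,2], by decide⟩, by show pw _ 4 = eM; decide⟩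
  | 2 => ⟨⟨!![2,2;2,1], by decide⟩, by show pw _ 4 = eM; decide⟩
  | _ => ⟨⟨!![2,1;1,1], by decide⟩, by show pw _ 4 = eM; decide⟩

def F : QuaternionGroup 2 → ↥Qgrp
  | .a k => qa k.val
  | .xa k => qx k.val

def Fhom : QuaternionGroup 2 →* ↥Qgrp where
  toFun := F
  map_one' := by decide
  map_mul' := by decide +kernel

theorem Fbij : Function.Bijective F := by
  constructor
  · have h : ∀ a b : QuaternionGroup 2, F a = F b → a = b := by decide +kernel
    exact fun {a b} => h a b
  · have h : ∀ y : ↥Qgrp, ∃ x, F x = y := by decide +kernel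
    exact h

theorem final :
    IsDCGroup (Matrix.SpecialLinearGroup (Fin 2) (ZMod 3)) ∧
    ¬ IsSupersolvable (Matrix.SpecialLinearGroup (Fin 2) (ZMod 3)) ∧
    ∃ P : Sylow 2 (Matrix.SpecialLinearGroup (Fin 2) (ZMod 3)),
      (¬ ∀ a b : (P : Subgroup (Matrix.SpecialLinearGroup (Fin 2) (ZMod 3))),
        a * b = b * a) ∧
      Nonempty ((P : Subgroup (Matrix.SpecialLinearGroup (Fin 2) (ZMod 3))) ≃*
        QuaternionGroup 2) := by
  refine ⟨dc, not_ss, Psyl, ?_, ?_⟩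
  · intro h
    have h2 := h (qa 1) (qx 0)
    have h3 : (qa 1 : Gsl) * (qx 0 : Gsl) = (qx 0 : Gsl) * (qa 1 : Gsl) :=
      congrArg Subtype.val h2
    revert h3
    decide
  · exact ⟨(MulEquiv.ofBijective Fhom Fbij).symm⟩



end SL23Aux

theorem sl23_dc_not_supersolvable :
    IsDCGroup (Matrix.SpecialLinearGroup (Fin 2) (ZMod 3)) ∧
    ¬ IsSupersolvable (Matrix.SpecialLinearGroup (Fin 2) (ZMod 3)) ∧
    ∃ P : Sylow 2 (Matrix.SpecialLinearGroup (Fin 2) (ZMod 3)),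
      (¬ ∀ a b : (P : Subgroup (Matrix.SpecialLinearGroup (Fin 2) (ZMod 3))),
        a * b = b * a) ∧
      Nonempty ((P : Subgroup (Matrix.SpecialLinearGroup (Fin 2) (ZMod 3))) ≃*
        QuaternionGroup 2) :=
  SL23Aux.final
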